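/- arXiv:2006.14024 — 3 statements merged into one kernel-verified Lean document; each statement's English description precedes it below -/
import Mathlib

section
/- Let 𝔇̃(ω) = (-ω² + 2iγω + Ω_R²)^{-1} be the 2×2 retarded propagator with γ > 0 and Ω_R² having diagonal ω_R² + λ₂ and off-diagonal -λ₂. Then for n ≠ ν the pointwise identity ω·Im[𝔇̃(ω)_{nn}] + 2γω²·|𝔇̃(ω)_{nn}|² + λ₂·ω·Im[𝔇̃(ω)_{nn}·𝔇̃(ω)_{νn}*] = 0 holds for all real ω. -/
/-- The matrix -ω² I + 2iγω I + Ω_R², where Ω_R² has diagonal ω_R² + λ₂ and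
off-diagonal -λ₂ (λ₂ written `lam`). -/
noncomputable def invProp (γ ωR lam ω : ℝ) : Matrix (Fin 2) (Fin 2) ℂ :=
  !![((-ω ^ 2 + ωR ^ 2 + lam : ℝ) : ℂ) + 2 * γ * ω * Complex.I, ((-lam : ℝ) : ℂ);
     ((-lam : ℝ) : ℂ), ((-ω ^ 2 + ωR ^ 2 + lam : ℝ) : ℂ) + 2 * γ * ω * Complex.I]

/-- Key scalar identity: for `A` with `A.im = 2γω` and `d = A² - l² ≠ 0`,
the combination of imaginary parts and modulus squared vanishes. -/
lemma propagator_key (γ ω l : ℝ) (A : ℂ) (hA : A.im = 2*γ*ω) (d : ℂ)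
    (hd : d = A^2 - (l:ℂ)^2) (hd0 : d ≠ 0) :
    ω * (A/d).im + 2*γ*ω^2 * ‖A/d‖^2
      + l*ω*((A/d) * (starRingEnd ℂ) ((l:ℂ)/d)).im = 0 := by
  have hN : Complex.normSq d ≠ 0 := by simpa [Complex.normSq_eq_zero] using hd0
  have habs : ‖A/d‖ ^ 2 = Complex.normSq A / Complex.normSq d := by
    rw [Complex.sq_norm, Complex.normSq_div]
  rw [habs]
  have hdre : d.re = A.re^2 - (2*γ*ω)^2 - l^2 := by
    rw [hd]; simp [pow_two, Complex.mul_re, hA]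
  have hdim : d.im = 2*A.re*(2*γ*ω) := by
    rw [hd]; simp [pow_two, Complex.mul_im, hA]; ring
  have hnormA : Complex.normSq A = A.re^2 + (2*γ*ω)^2 := by
    rw [Complex.normSq_apply, hA]; ring
  have hNval : Complex.normSq d
      = (A.re^2 - (2*γ*ω)^2 - l^2)^2 + (2*A.re*(2*γ*ω))^2 := by
    rw [Complex.normSq_apply, hdre, hdim]; ring
  rw [hnormA]
  rw [hNval] at hN
  simp only [Complex.div_im, Complex.div_re, Complex.mul_im, Complex.mul_re,
    Complex.ofReal_re, Complex.ofReal_im, Complex.conj_re, Complex.conj_im,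
    hdre, hdim, hA, hNval]
  field_simp
  ring

/-- Pointwise identity for the two-oscillator retarded propagator 𝔇̃(ω):
ω·Im 𝔇̃_{nn} + 2γω²·|𝔇̃_{nn}|² + λ₂·ω·Im(𝔇̃_{nn}·𝔇̃_{νn}*) = 0 for all real ω,
with n ≠ ν in {1,2}. -/
theorem propagator_identity_diag (γ ωR lam : ℝ)
    (hγ : 0 < γ) (hωR : 0 < ωR) (hlam : 0 ≤ lam) (ω : ℝ)
    (hinv : IsUnit (invProp γ ωR lam ω)) (n ν : Fin 2) (hnν : n ≠ ν) :
    ω * ((invProp γ ωR lam ω)⁻¹ n n).im +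
        2 * γ * ω ^ 2 * ‖(invProp γ ωR lam ω)⁻¹ n n‖ ^ 2 +
        lam * ω *
          ((invProp γ ωR lam ω)⁻¹ n n * (starRingEnd ℂ) ((invProp γ ωR lam ω)⁻¹ ν n)).im
      = 0 := by
  set A : ℂ := ((-ω ^ 2 + ωR ^ 2 + lam : ℝ) : ℂ) + 2 * γ * ω * Complex.I with hA
  set d : ℂ := A ^ 2 - (lam : ℂ) ^ 2 with hdd
  have hdet : (invProp γ ωR lam ω).det = d := by
    simp only [invProp, Matrix.det_fin_two_of, hdd, hA]
    push_cast
    ring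
  have hd0 : d ≠ 0 := by
    rw [← hdet]
    exact (Matrix.isUnit_iff_isUnit_det _ |>.mp hinv).ne_zero
  have hM : (invProp γ ωR lam ω)⁻¹ = d⁻¹ • !![A, (lam:ℂ); (lam:ℂ), A] := by
    rw [Matrix.inv_def, hdet, Ring.inverse_eq_inv']
    congr 1
    rw [invProp, Matrix.adjugate_fin_two_of]
    ext i j
    fin_cases i <;> fin_cases j <;> simp [hA] <;> push_cast <;> ring
  have e1 : (invProp γ ωR lam ω)⁻¹ n n = A / d := by
    fin_cases n <;> simp [hM, div_eq_inv_mul]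
  have e2 : (invProp γ ωR lam ω)⁻¹ ν n = (lam:ℂ) / d := by
    fin_cases n <;> fin_cases ν <;>
      first
        | exact absurd rfl hnν
        | simp [hM, div_eq_inv_mul]
  rw [e1, e2]
  have hAim : A.im = 2 * γ * ω := by
    simp [hA, pow_two, Complex.mul_im, Complex.mul_re]
  exact propagator_key γ ω lam A hAim d hdd hd0
end

section
/- With 𝔇̃(ω) as in the two-oscillator model (γ > 0, quadratic coupling λ₂), for n ≠ ν the identity 2γω²·|𝔇̃(ω)_{nν}|² + λ₂·ω·Im[𝔇̃(ω)_{nν}·𝔇̃(ω)_{νν}*] = 0 holds pointwise for all real ω. -/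
lemma key_scalar (γ ω lam : ℝ) (z a : ℂ) (ha : a.im = 2 * γ * ω) :
    2 * γ * ω ^ 2 * ‖z * (lam : ℂ)‖ ^ 2 +
      lam * ω * (z * (lam : ℂ) * (starRingEnd ℂ) (z * a)).im = 0 := by
  simp [Complex.sq_norm, Complex.normSq_apply, Complex.mul_re, Complex.mul_im,
    Complex.conj_re, Complex.conj_im, ha]
  rw [mul_pow, sq_abs, Complex.sq_norm, Complex.normSq_apply]
  ring

/-- Pointwise identity for the two-oscillator retarded propagator 𝔇̃(ω):
2γω²·|𝔇̃_{nν}|² + λ₂·ω·Im(𝔇̃_{nν}·𝔇̃_{νν}*) = 0 for all real ω, n ≠ ν in {1,2}. -/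
theorem propagator_identity_offdiag (γ ωR lam : ℝ)
    (hγ : 0 < γ) (hωR : 0 < ωR) (hlam : 0 ≤ lam) (ω : ℝ)
    (hinv : IsUnit (invProp γ ωR lam ω)) (n ν : Fin 2) (hnν : n ≠ ν) :
    2 * γ * ω ^ 2 * ‖(invProp γ ωR lam ω)⁻¹ n ν‖ ^ 2 +
        lam * ω *
          ((invProp γ ωR lam ω)⁻¹ n ν * (starRingEnd ℂ) ((invProp γ ωR lam ω)⁻¹ ν ν)).im
      = 0 := by
  rw [Matrix.inv_def]
  set d := (invProp γ ωR lam ω).det with hd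
  have hadj : (invProp γ ωR lam ω).adjugate =
      !![((-ω ^ 2 + ωR ^ 2 + lam : ℝ) : ℂ) + 2 * γ * ω * Complex.I, ((lam : ℝ) : ℂ);
         ((lam : ℝ) : ℂ), ((-ω ^ 2 + ωR ^ 2 + lam : ℝ) : ℂ) + 2 * γ * ω * Complex.I] := by
    rw [invProp, Matrix.adjugate_fin_two]
    norm_num
  rw [hadj, Ring.inverse_eq_inv']
  fin_cases n <;> fin_cases ν <;> simp only [Matrix.smul_apply, smul_eq_mul,
    Matrix.cons_val', Matrix.cons_val_zero, Matrix.cons_val_one, Matrix.head_cons,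
    Matrix.empty_val', Matrix.cons_val_fin_one, Matrix.head_fin_const, Fin.mk_zero,
    Fin.mk_one, Fin.isValue] <;> first
  | exact absurd rfl hnν
  | exact key_scalar γ ω lam d⁻¹ _ (by simp [← Complex.ofReal_pow])
end

section
/- Zeroth-order power balance (NESS): with the definitions P_ξ^(0) = -∫ (dω/2π) ω Im[𝔇̃(ω)]_{nn} [G̃_H(ω)]_{nn}, P_γ^(0) = -2γ Σ_k ∫ (dω/2π) ω² |[𝔇̃(ω)]_{nk}|² [G̃_H(ω)]_{kk}, and P_{ν→n}^(0,2) = -λ₂ Σ_k ∫ (dω/2π) ω Im{[𝔇̃(ω)]_{nk}[𝔇̃(ω)*]_{νk}} [G̃_H(ω)]_{kk}, assuming all integrals converge, one has P_ξ^(0) + P_γ^(0) + P_{ν→n}^(0,2) = 0 for n = 1, 2. -/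
open MeasureTheory Real

/-- The retarded propagator 𝔇̃(ω) of the two coupled damped oscillators. -/
noncomputable def propD (γ ωR lam ω : ℝ) : Matrix (Fin 2) (Fin 2) ℂ :=
  (invProp γ ωR lam ω)⁻¹

lemma propD_eq (γ ωR lam ω : ℝ) :
    propD γ ωR lam ω =
      (((((-ω ^ 2 + ωR ^ 2 + lam : ℝ) : ℂ) + 2 * γ * ω * Complex.I) ^ 2 - (lam:ℂ)^2)⁻¹) •
        !![(((-ω ^ 2 + ωR ^ 2 + lam : ℝ) : ℂ) + 2 * γ * ω * Complex.I), (lam:ℂ);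
           (lam:ℂ), (((-ω ^ 2 + ωR ^ 2 + lam : ℝ) : ℂ) + 2 * γ * ω * Complex.I)] := by
  rw [propD, Matrix.inv_def, Matrix.adjugate_fin_two, invProp, Matrix.det_fin_two_of]
  rw [Ring.inverse_eq_inv']
  congr 1
  · push_cast; ring
  · push_cast; ext i j; fin_cases i <;> fin_cases j <;> simp

lemma propD_diag (γ ωR lam ω : ℝ) (i : Fin 2) :
    propD γ ωR lam ω i i =
      (((((-ω ^ 2 + ωR ^ 2 + lam : ℝ) : ℂ) + 2 * γ * ω * Complex.I) ^ 2 - (lam:ℂ)^2)⁻¹) *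
        (((-ω ^ 2 + ωR ^ 2 + lam : ℝ) : ℂ) + 2 * γ * ω * Complex.I) := by
  rw [propD_eq]; fin_cases i <;> simp [Matrix.smul_apply]

lemma propD_off (γ ωR lam ω : ℝ) (i j : Fin 2) (h : i ≠ j) :
    propD γ ωR lam ω i j =
      (((((-ω ^ 2 + ωR ^ 2 + lam : ℝ) : ℂ) + 2 * γ * ω * Complex.I) ^ 2 - (lam:ℂ)^2)⁻¹) *
        (lam:ℂ) := by
  rw [propD_eq]; fin_cases i <;> fin_cases j <;> first | (exfalso; exact h rfl) | simp [Matrix.smul_apply]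

lemma keyA (γ lam ω x : ℝ) :
    ω * (((((x:ℂ) + 2*γ*ω*Complex.I)^2 - (lam:ℂ)^2)⁻¹ * ((x:ℂ) + 2*γ*ω*Complex.I)).im)
    + 2*γ * (ω^2 * ‖(((x:ℂ) + 2*γ*ω*Complex.I)^2 - (lam:ℂ)^2)⁻¹ * ((x:ℂ) + 2*γ*ω*Complex.I)‖^2)
    + lam * (ω * (((((x:ℂ) + 2*γ*ω*Complex.I)^2 - (lam:ℂ)^2)⁻¹ * ((x:ℂ) + 2*γ*ω*Complex.I) *
        (starRingEnd ℂ) ((((x:ℂ) + 2*γ*ω*Complex.I)^2 - (lam:ℂ)^2)⁻¹ * (lam:ℂ))).im)) = 0 := by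
  set a : ℂ := (x:ℂ) + 2*γ*ω*Complex.I with ha
  set d : ℂ := a^2 - (lam:ℂ)^2 with hd'
  by_cases hd : d = 0
  · simp [hd]
  · have h2 : Complex.normSq d ≠ 0 := fun h => hd (Complex.normSq_eq_zero.mp h)
    have hare : a.re = x := by simp [ha]
    have haim : a.im = 2*γ*ω := by simp [ha]
    have hdre : d.re = x^2 - (2*γ*ω)^2 - lam^2 := by
      rw [hd']; simp [pow_two, Complex.sub_re, Complex.mul_re, hare, haim]
    have hdim : d.im = 2*x*(2*γ*ω) := by
      rw [hd']; simp [pow_two, Complex.sub_im, Complex.mul_im, hare, haim]; ring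
    have e1 : d⁻¹ * a = a / d := by rw [div_eq_mul_inv, mul_comm]
    have e2 : d⁻¹ * (lam:ℂ) = (lam:ℂ) / d := by rw [div_eq_mul_inv, mul_comm]
    rw [e1, e2, Complex.sq_norm]
    simp only [Complex.div_im, Complex.div_re, Complex.mul_im, Complex.mul_re,
      Complex.conj_re, Complex.conj_im, map_div₀, Complex.normSq_div,
      Complex.ofReal_re, Complex.ofReal_im, Complex.normSq_apply]
    rw [hare, haim, hdre, hdim]
    rw [Complex.normSq_apply, hdre, hdim] at h2
    field_simp
    ring

lemma keyB (γ lam ω x : ℝ) :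
    2*γ * (ω^2 * ‖(((x:ℂ) + 2*γ*ω*Complex.I)^2 - (lam:ℂ)^2)⁻¹ * (lam:ℂ)‖^2)
    + lam * (ω * (((((x:ℂ) + 2*γ*ω*Complex.I)^2 - (lam:ℂ)^2)⁻¹ * (lam:ℂ) *
        (starRingEnd ℂ) ((((x:ℂ) + 2*γ*ω*Complex.I)^2 - (lam:ℂ)^2)⁻¹ * ((x:ℂ) + 2*γ*ω*Complex.I))).im)) = 0 := by
  set a : ℂ := (x:ℂ) + 2*γ*ω*Complex.I with ha
  set d : ℂ := a^2 - (lam:ℂ)^2 with hd'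
  by_cases hd : d = 0
  · simp [hd]
  · have h2 : Complex.normSq d ≠ 0 := fun h => hd (Complex.normSq_eq_zero.mp h)
    have hare : a.re = x := by simp [ha]
    have haim : a.im = 2*γ*ω := by simp [ha]
    have e1 : d⁻¹ * a = a / d := by rw [div_eq_mul_inv, mul_comm]
    have e2 : d⁻¹ * (lam:ℂ) = (lam:ℂ) / d := by rw [div_eq_mul_inv, mul_comm]
    rw [e1, e2, Complex.sq_norm]
    simp only [Complex.div_im, Complex.div_re, Complex.mul_im, Complex.mul_re,
      Complex.conj_re, Complex.conj_im, map_div₀, Complex.normSq_div,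
      Complex.ofReal_re, Complex.ofReal_im, Complex.normSq_apply]
    have hdre : d.re = x^2 - (2*γ*ω)^2 - lam^2 := by
      rw [hd']; simp [pow_two, Complex.sub_re, Complex.mul_re, hare, haim]
    have hdim : d.im = 2*x*(2*γ*ω) := by
      rw [hd']; simp [pow_two, Complex.sub_im, Complex.mul_im, hare, haim]; ring
    rw [hare, haim, hdre, hdim]
    rw [Complex.normSq_apply, hdre, hdim] at h2
    field_simp
    ring

lemma pointwise_zero (γ ωR lam ω : ℝ) (GH : ℝ → Fin 2 → ℝ) (n ν : Fin 2) (hnν : n ≠ ν) :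
    ω * (propD γ ωR lam ω n n).im * GH ω n
    + 2*γ * (ω^2 * ‖propD γ ωR lam ω n 0‖^2 * GH ω 0)
    + 2*γ * (ω^2 * ‖propD γ ωR lam ω n 1‖^2 * GH ω 1)
    + lam * (ω * (propD γ ωR lam ω n 0 * (starRingEnd ℂ) (propD γ ωR lam ω ν 0)).im * GH ω 0)
    + lam * (ω * (propD γ ωR lam ω n 1 * (starRingEnd ℂ) (propD γ ωR lam ω ν 1)).im * GH ω 1) = 0 := by
  fin_cases n <;> fin_cases ν <;> simp only [Fin.mk_zero, Fin.mk_one] at hnν ⊢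
  · exact absurd rfl hnν
  · rw [propD_diag, propD_off γ ωR lam ω 0 1 (by decide), propD_off γ ωR lam ω 1 0 (by decide),
      propD_diag]
    linear_combination GH ω 0 * keyA γ lam ω (-ω^2+ωR^2+lam) + GH ω 1 * keyB γ lam ω (-ω^2+ωR^2+lam)
  · rw [propD_diag, propD_off γ ωR lam ω 1 0 (by decide), propD_off γ ωR lam ω 0 1 (by decide),
      propD_diag]
    linear_combination GH ω 1 * keyA γ lam ω (-ω^2+ωR^2+lam) + GH ω 0 * keyB γ lam ω (-ω^2+ωR^2+lam)
  · exact absurd rfl hnν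


/-- Zeroth-order power balance (NESS):
P_ξ^(0) + P_γ^(0) + P_{ν→n}^(0,2) = 0 for n = 1, 2 (ν = the other index), where
P_ξ^(0) = -∫ (dω/2π) ω Im 𝔇̃_{nn} G̃_H(ω)_{nn},
P_γ^(0) = -2γ Σ_k ∫ (dω/2π) ω² |𝔇̃_{nk}|² G̃_H(ω)_{kk},
P_{ν→n}^(0,2) = -λ₂ Σ_k ∫ (dω/2π) ω Im(𝔇̃_{nk} 𝔇̃_{νk}*) G̃_H(ω)_{kk},
with G̃_H diagonal, real, even, and all integrands integrable. -/
theorem zeroth_order_power_balance (γ ωR lam : ℝ)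
    (hγ : 0 < γ) (hωR : 0 < ωR) (hlam : 0 ≤ lam)
    (GH : ℝ → Fin 2 → ℝ)
    (hGH_even : ∀ (ω : ℝ) (k : Fin 2), GH (-ω) k = GH ω k)
    (n ν : Fin 2) (hnν : n ≠ ν)
    (hint1 : Integrable (fun ω : ℝ => ω * (propD γ ωR lam ω n n).im * GH ω n))
    (hint2 : ∀ k : Fin 2,
      Integrable (fun ω : ℝ => ω ^ 2 * ‖propD γ ωR lam ω n k‖ ^ 2 * GH ω k))
    (hint3 : ∀ k : Fin 2,
      Integrable (fun ω : ℝ =>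
        ω * (propD γ ωR lam ω n k * (starRingEnd ℂ) (propD γ ωR lam ω ν k)).im * GH ω k)) :
    (-(∫ ω : ℝ, ω * (propD γ ωR lam ω n n).im * GH ω n) / (2 * π)) +
        (-(2 * γ) * ∑ k : Fin 2,
          (∫ ω : ℝ, ω ^ 2 * ‖propD γ ωR lam ω n k‖ ^ 2 * GH ω k) / (2 * π)) +
        (-lam * ∑ k : Fin 2,
          (∫ ω : ℝ,
            ω * (propD γ ωR lam ω n k * (starRingEnd ℂ) (propD γ ωR lam ω ν k)).im * GH ω k)
            / (2 * π)) = 0 := by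
  have h2a : Integrable (fun ω : ℝ => 2*γ * (ω ^ 2 * ‖propD γ ωR lam ω n 0‖ ^ 2 * GH ω 0)) :=
    (hint2 0).const_mul _
  have h2b : Integrable (fun ω : ℝ => 2*γ * (ω ^ 2 * ‖propD γ ωR lam ω n 1‖ ^ 2 * GH ω 1)) :=
    (hint2 1).const_mul _
  have h3a : Integrable (fun ω : ℝ => lam * (ω * (propD γ ωR lam ω n 0 * (starRingEnd ℂ) (propD γ ωR lam ω ν 0)).im * GH ω 0)) :=
    (hint3 0).const_mul _
  have h3b : Integrable (fun ω : ℝ => lam * (ω * (propD γ ωR lam ω n 1 * (starRingEnd ℂ) (propD γ ωR lam ω ν 1)).im * GH ω 1)) :=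
    (hint3 1).const_mul _
  have s1 : Integrable (fun ω : ℝ => ω * (propD γ ωR lam ω n n).im * GH ω n
      + 2*γ * (ω ^ 2 * ‖propD γ ωR lam ω n 0‖ ^ 2 * GH ω 0)) := hint1.add h2a
  have s2 : Integrable (fun ω : ℝ => ω * (propD γ ωR lam ω n n).im * GH ω n
      + 2*γ * (ω ^ 2 * ‖propD γ ωR lam ω n 0‖ ^ 2 * GH ω 0)
      + 2*γ * (ω ^ 2 * ‖propD γ ωR lam ω n 1‖ ^ 2 * GH ω 1)) := s1.add h2b
  have s3 : Integrable (fun ω : ℝ => ω * (propD γ ωR lam ω n n).im * GH ω n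
      + 2*γ * (ω ^ 2 * ‖propD γ ωR lam ω n 0‖ ^ 2 * GH ω 0)
      + 2*γ * (ω ^ 2 * ‖propD γ ωR lam ω n 1‖ ^ 2 * GH ω 1)
      + lam * (ω * (propD γ ωR lam ω n 0 * (starRingEnd ℂ) (propD γ ωR lam ω ν 0)).im * GH ω 0)) :=
    s2.add h3a
  have key : (∫ ω : ℝ, ω * (propD γ ωR lam ω n n).im * GH ω n)
      + 2*γ * (∫ ω : ℝ, ω ^ 2 * ‖propD γ ωR lam ω n 0‖ ^ 2 * GH ω 0)
      + 2*γ * (∫ ω : ℝ, ω ^ 2 * ‖propD γ ωR lam ω n 1‖ ^ 2 * GH ω 1)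
      + lam * (∫ ω : ℝ, ω * (propD γ ωR lam ω n 0 * (starRingEnd ℂ) (propD γ ωR lam ω ν 0)).im * GH ω 0)
      + lam * (∫ ω : ℝ, ω * (propD γ ωR lam ω n 1 * (starRingEnd ℂ) (propD γ ωR lam ω ν 1)).im * GH ω 1)
      = 0 := by
    rw [← integral_const_mul (2*γ), ← integral_const_mul (2*γ), ← integral_const_mul lam,
      ← integral_const_mul lam,
      ← integral_add hint1 h2a, ← integral_add s1 h2b, ← integral_add s2 h3a,
      ← integral_add s3 h3b]
    have h0 : (fun ω : ℝ => ω * (propD γ ωR lam ω n n).im * GH ω n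
        + 2*γ * (ω ^ 2 * ‖propD γ ωR lam ω n 0‖ ^ 2 * GH ω 0)
        + 2*γ * (ω ^ 2 * ‖propD γ ωR lam ω n 1‖ ^ 2 * GH ω 1)
        + lam * (ω * (propD γ ωR lam ω n 0 * (starRingEnd ℂ) (propD γ ωR lam ω ν 0)).im * GH ω 0)
        + lam * (ω * (propD γ ωR lam ω n 1 * (starRingEnd ℂ) (propD γ ωR lam ω ν 1)).im * GH ω 1))
        = fun _ => (0:ℝ) :=
      funext fun ω => pointwise_zero γ ωR lam ω GH n ν hnν
    rw [h0, integral_zero]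
  rw [Fin.sum_univ_two, Fin.sum_univ_two]
  linear_combination (-(1/(2*π))) * key
end
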